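/- Let A be a unital C*-algebra and P : A → A a unital completely positive projection (P∘P = P, P(1) = 1). Then the range PA, equipped with the original norm and involution and the product a ∘ b := P(ab), is a unital C*-algebra (Choi–Effros product). -/

import Mathlib

/-- A bounded linear map on a C*-algebra is completely positive if its entrywise
application maps positive matrices (those of the form `Nᴴ * N`) to positive matrices,
for every matrix size. -/
def IsCompletelyPositive {A : Type*} [NormedRing A] [StarRing A] [NormedAlgebra ℂ A]
    (P : A →L[ℂ] A) : Prop :=
  ∀ (n : ℕ) (M : Matrix (Fin n) (Fin n) A),
    (∃ N : Matrix (Fin n) (Fin n) A, M = N.conjTranspose * N) →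
    ∃ N' : Matrix (Fin n) (Fin n) A, M.map (fun a => P a) = N'.conjTranspose * N'

open Complex in
/-- Polarization: `4 (u v)` as a combination of four "squares" built from `v` and `star u`. -/
lemma ChoiEffros.pol_aux {A : Type*} [Ring A] [StarRing A] [Algebra ℂ A] [StarModule ℂ A]
    (u v : A) :
    (4:ℂ) • (u * v) =
      star (v + star u) * (v + star u)
      + I • (star (v + I • star u) * (v + I • star u))
      - star (v - star u) * (v - star u)
      - I • (star (v - I • star u) * (v - I • star u)) := by
  simp only [star_add, star_sub, star_smul, RCLike.star_def, Complex.conj_I, add_mul, mul_add,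
    sub_mul, mul_sub, smul_mul_assoc, mul_smul_comm, smul_smul, smul_sub, smul_add, neg_smul,
    star_star, Complex.I_mul_I, neg_neg, one_smul, neg_mul, neg_sub]
  match_scalars <;> simp [Complex.I_sq] <;> ring

/-- Extraction of the `2×2` complete-positivity data at the matrix `!![a, b; 0, 0]`. -/
lemma ChoiEffros.key2 {A : Type*} [NormedRing A] [StarRing A] [CStarRing A] [NormedAlgebra ℂ A]
    [CompleteSpace A] [StarModule ℂ A] (P : A →L[ℂ] A) (hcp : IsCompletelyPositive P)
    (a b : A) :
    ∃ v w : Fin 2 → A,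
      P (star a * a) = star (v 0) * v 0 + star (v 1) * v 1 ∧
      P (star a * b) = star (v 0) * w 0 + star (v 1) * w 1 ∧
      P (star b * a) = star (w 0) * v 0 + star (w 1) * v 1 ∧
      P (star b * b) = star (w 0) * w 0 + star (w 1) * w 1 := by
  set N : Matrix (Fin 2) (Fin 2) A := !![a, b; 0, 0] with hN
  obtain ⟨N', hN'⟩ := hcp 2 (N.conjTranspose * N) ⟨N, rfl⟩
  have hE : ∀ i j : Fin 2,
      P ((N.conjTranspose * N) i j) = star (N' 0 i) * N' 0 j + star (N' 1 i) * N' 1 j := by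
    intro i j
    have := congrFun (congrFun hN' i) j
    simpa [Matrix.map_apply, Matrix.mul_apply, Matrix.conjTranspose_apply,
      Fin.sum_univ_two] using this
  refine ⟨fun k => N' k 0, fun k => N' k 1, ?_, ?_, ?_, ?_⟩
  · have := hE 0 0
    simpa [hN, Matrix.mul_apply, Matrix.conjTranspose_apply, Fin.sum_univ_two] using this
  · have := hE 0 1
    simpa [hN, Matrix.mul_apply, Matrix.conjTranspose_apply, Fin.sum_univ_two] using this
  · have := hE 1 0
    simpa [hN, Matrix.mul_apply, Matrix.conjTranspose_apply, Fin.sum_univ_two] using this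
  · have := hE 1 1
    simpa [hN, Matrix.mul_apply, Matrix.conjTranspose_apply, Fin.sum_univ_two] using this

/-- Pure ring identity behind the Kadison–Schwarz inequality. -/
lemma ChoiEffros.schwarz_alg {A : Type*} [Ring A] [StarRing A] (c v0 v1 w0 w1 X : A)
    (hX : X = star v0 * v0 + star v1 * v1)
    (hsc : star c = star v0 * w0 + star v1 * w1)
    (hc : c = star w0 * v0 + star w1 * v1)
    (h1 : (1 : A) = star w0 * w0 + star w1 * w1) :
    X - star c * c =
      star (v0 - w0 * c) * (v0 - w0 * c) + star (v1 - w1 * c) * (v1 - w1 * c) := by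
  have e : star (v0 - w0 * c) * (v0 - w0 * c) + star (v1 - w1 * c) * (v1 - w1 * c)
      = (star v0 * v0 + star v1 * v1) - (star v0 * w0 + star v1 * w1) * c
        - star c * (star w0 * v0 + star w1 * v1)
        + star c * ((star w0 * w0 + star w1 * w1) * c) := by
    simp only [star_sub, star_mul]
    noncomm_ring
  rw [e, ← hsc, ← hc, ← h1, one_mul, hX]
  noncomm_ring

/-- Choi–Effros: If `P` is a unital completely positive projection on a
unital C*-algebra `A`, then the range `P A`, with the original norm and involution and
the product `a ∘ b := P(ab)`, is a unital C*-algebra: the range is selfadjoint and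
contains the unit, the product `∘` is associative and submultiplicative on `P A`, the
involution is an anti-homomorphism for `∘`, and the C*-identity holds. -/
theorem stmt_16 {A : Type*} [NormedRing A] [StarRing A] [CStarRing A] [NormedAlgebra ℂ A]
    [CompleteSpace A] [StarModule ℂ A]
    (P : A →L[ℂ] A)
    (hidem : ∀ a : A, P (P a) = P a)
    (hone : P 1 = 1)
    (hcp : IsCompletelyPositive P) :
    (∀ a : A, ∃ b : A, star (P a) = P b) ∧
    ((1 : A) ∈ Set.range fun a => P a) ∧
    (∀ a b c : A, P (P (P a * P b) * P c) = P (P a * P (P b * P c))) ∧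
    (∀ a b : A, ‖P (P a * P b)‖ ≤ ‖P a‖ * ‖P b‖) ∧
    (∀ a b : A, star (P (P a * P b)) = P (star (P b) * star (P a))) ∧
    (∀ a : A, ‖P (P a * star (P a))‖ = ‖P a‖ ^ 2) := by
  letI : CStarAlgebra A := ⟨⟩
  letI : PartialOrder A := CStarAlgebra.spectralOrder A
  letI : StarOrderedRing A := CStarAlgebra.spectralOrderedRing A
  -- star preservation
  have hstar : ∀ a : A, P (star a) = star (P a) := by
    intro a
    obtain ⟨v, w, -, h12, h21, -⟩ := ChoiEffros.key2 P hcp a 1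
    rw [mul_one] at h12
    rw [star_one, one_mul] at h21
    rw [h12, h21]
    simp only [star_add, star_mul, star_star]
  -- Kadison–Schwarz inequality
  have hschwarz : ∀ a : A, star (P a) * P a ≤ P (star a * a) := by
    intro a
    obtain ⟨v, w, h11, h12, h21, h22⟩ := ChoiEffros.key2 P hcp a 1
    rw [mul_one] at h12
    rw [star_one, one_mul] at h21
    rw [star_one, one_mul, hone] at h22
    have hkey := ChoiEffros.schwarz_alg (P a) (v 0) (v 1) (w 0) (w 1) (P (star a * a))
      h11 (by rw [← hstar a, h12]) h21 h22
    have h0 : (0:A) ≤ star (v 0 - w 0 * P a) * (v 0 - w 0 * P a)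
        + star (v 1 - w 1 * P a) * (v 1 - w 1 * P a) :=
      add_nonneg (star_mul_self_nonneg _) (star_mul_self_nonneg _)
    rw [← hkey] at h0
    exact sub_nonneg.mp h0
  -- positivity and monotonicity
  have hpos : ∀ x : A, 0 ≤ x → 0 ≤ P x := by
    intro x hx
    have hy : CFC.sqrt x * CFC.sqrt x = x := CFC.sqrt_mul_sqrt_self x hx
    have hysa : star (CFC.sqrt x) = CFC.sqrt x :=
      (IsSelfAdjoint.of_nonneg (CFC.sqrt_nonneg x)).star_eq
    calc (0:A) ≤ star (P (CFC.sqrt x)) * P (CFC.sqrt x) := star_mul_self_nonneg _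
    _ ≤ P (star (CFC.sqrt x) * CFC.sqrt x) := hschwarz _
    _ = P x := by rw [hysa, hy]
  have hmono : ∀ x y : A, x ≤ y → P x ≤ P y := by
    intro x y hxy
    have := hpos (y - x) (sub_nonneg.mpr hxy)
    rw [map_sub] at this
    exact sub_nonneg.mp this
  -- contractivity
  have hnorm : ∀ x : A, ‖P x‖ ≤ ‖x‖ := by
    rcases subsingleton_or_nontrivial A with hs | hnt
    · intro x
      rw [Subsingleton.elim (P x) 0, Subsingleton.elim x 0]
    · intro x
      have h1 : star (P x) * P x ≤ P (star x * x) := hschwarz x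
      have hsa : IsSelfAdjoint (star x * x) := IsSelfAdjoint.star_mul_self x
      have h2 : star x * x ≤ algebraMap ℝ A ‖star x * x‖ :=
        IsSelfAdjoint.le_algebraMap_norm_self hsa
      have h3 : P (algebraMap ℝ A ‖star x * x‖) = algebraMap ℝ A ‖star x * x‖ := by
        rw [IsScalarTower.algebraMap_apply ℝ ℂ A, Algebra.algebraMap_eq_smul_one, map_smul,
          hone]
      have h4 : star (P x) * P x ≤ algebraMap ℝ A ‖star x * x‖ :=
        h1.trans (by rw [← h3]; exact hmono _ _ h2)
      have h5 : ‖star (P x) * P x‖ ≤ ‖algebraMap ℝ A ‖star x * x‖‖ :=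
        CStarAlgebra.norm_le_norm_of_nonneg_of_le (star_mul_self_nonneg _) h4
      have h6 : ‖algebraMap ℝ A ‖star x * x‖‖ = ‖star x * x‖ := by
        rw [norm_algebraMap']
        exact Real.norm_of_nonneg (norm_nonneg _)
      rw [h6, CStarRing.norm_star_mul_self, CStarRing.norm_star_mul_self] at h5
      exact le_of_pow_le_pow_left₀ two_ne_zero (norm_nonneg x) (by rw [pow_two, pow_two]; exact h5)
  -- kernel lemma: if d ≥ 0 and P d = 0 then P (d x) = 0 = P (x d)
  have hker : ∀ d : A, 0 ≤ d → P d = 0 → ∀ x : A, P (d * x) = 0 ∧ P (x * d) = 0 := by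
    have main : ∀ d : A, 0 ≤ d → P d = 0 → ∀ x : A, P (d * x) = 0 ∧ P (star x * d) = 0 := by
      intro d hd hPd x
      set y := CFC.sqrt d with hy
      have hyy : y * y = d := CFC.sqrt_mul_sqrt_self d hd
      have hysa : star y = y := (IsSelfAdjoint.of_nonneg (CFC.sqrt_nonneg d)).star_eq
      obtain ⟨v, w, h11, h12, h21, -⟩ := ChoiEffros.key2 P hcp y (y * x)
      rw [hysa, hyy, hPd] at h11
      have h12' : P (d * x) = star (v 0) * w 0 + star (v 1) * w 1 := by
        rw [show d * x = star y * (y * x) by rw [hysa, ← mul_assoc, hyy]]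
        exact h12
      have h21' : P (star x * d) = star (w 0) * v 0 + star (w 1) * v 1 := by
        rw [show star x * d = star (y * x) * y by rw [star_mul, hysa, mul_assoc, hyy]]
        exact h21
      -- both terms vanish
      have hv0 : v 0 = 0 := by
        have t0 : (0:A) ≤ star (v 0) * v 0 := star_mul_self_nonneg _
        have t1 : (0:A) ≤ star (v 1) * v 1 := star_mul_self_nonneg _
        have : star (v 0) * v 0 = 0 := by
          have := h11.symm
          have h' : star (v 0) * v 0 ≤ 0 := by
            calc star (v 0) * v 0 = 0 - star (v 1) * v 1 := by
                  rw [← this]; abel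
            _ ≤ 0 := by simpa using neg_nonpos.mpr t1
          exact le_antisymm h' t0
        exact (CStarRing.star_mul_self_eq_zero_iff _).mp this
      have hv1 : v 1 = 0 := by
        have t0 : (0:A) ≤ star (v 0) * v 0 := star_mul_self_nonneg _
        have t1 : (0:A) ≤ star (v 1) * v 1 := star_mul_self_nonneg _
        have : star (v 1) * v 1 = 0 := by
          have h' : star (v 1) * v 1 ≤ 0 := by
            calc star (v 1) * v 1 = 0 - star (v 0) * v 0 := by rw [← h11.symm]; abel
            _ ≤ 0 := by simpa using neg_nonpos.mpr t0
          exact le_antisymm h' t1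
        exact (CStarRing.star_mul_self_eq_zero_iff _).mp this
      constructor
      · rw [h12', hv0, hv1]; simp
      · rw [h21', hv0, hv1]; simp
    intro d hd hPd x
    refine ⟨(main d hd hPd x).1, ?_⟩
    have := (main d hd hPd (star x)).2
    rwa [star_star] at this
  -- splitting lemma for squares of fixed points
  have hsq : ∀ w z : A, P w = w →
      P (z * P (star w * w)) = P (z * (star w * w)) ∧
      P (P (star w * w) * z) = P ((star w * w) * z) := by
    intro w z hw
    set d := P (star w * w) - star w * w with hd
    have hd0 : 0 ≤ d := by
      have := hschwarz w
      rw [hw] at this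
      exact sub_nonneg.mpr this
    have hPd : P d = 0 := by
      rw [hd, map_sub, hidem, sub_self]
    obtain ⟨hr, hl⟩ := hker d hd0 hPd z
    constructor
    · have : P (z * P (star w * w)) - P (z * (star w * w)) = 0 := by
        rw [← map_sub, ← mul_sub, ← hd, hl]
      exact sub_eq_zero.mp this
    · have : P (P (star w * w) * z) - P ((star w * w) * z) = 0 := by
        rw [← map_sub, ← sub_mul, ← hd, hr]
      exact sub_eq_zero.mp this
  -- range is closed under everything we need
  -- product splitting via polarization
  have hmul : ∀ u v z : A, P u = u → P v = v →
      P (z * P (u * v)) = P (z * (u * v)) ∧ P (P (u * v) * z) = P ((u * v) * z) := by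
    intro u v z hu hv
    have hsu : P (star u) = star u := by rw [hstar, hu]
    set x := star u with hx
    set w0 := v + x with hw0
    set w1 := v + Complex.I • x with hw1
    set w2 := v - x with hw2
    set w3 := v - Complex.I • x with hw3
    have hpw0 : P w0 = w0 := by rw [hw0, map_add, hv, hsu]
    have hpw1 : P w1 = w1 := by rw [hw1, map_add, map_smul, hv, hsu]
    have hpw2 : P w2 = w2 := by rw [hw2, map_sub, hv, hsu]
    have hpw3 : P w3 = w3 := by rw [hw3, map_sub, map_smul, hv, hsu]
    have hpol : (4:ℂ) • (u * v) =
        star w0 * w0 + Complex.I • (star w1 * w1) - star w2 * w2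
          - Complex.I • (star w3 * w3) := ChoiEffros.pol_aux u v
    constructor
    · have h4 : (4:ℂ) • P (z * P (u * v)) = (4:ℂ) • P (z * (u * v)) := by
        calc (4:ℂ) • P (z * P (u * v)) = P (z * P ((4:ℂ) • (u * v))) := by
              rw [map_smul, mul_smul_comm, map_smul]
        _ = P (z * P (star w0 * w0)) + Complex.I • P (z * P (star w1 * w1))
              - P (z * P (star w2 * w2)) - Complex.I • P (z * P (star w3 * w3)) := by
              rw [hpol]
              simp only [map_add, map_sub, map_smul, mul_add, mul_sub, mul_smul_comm]
        _ = P (z * (star w0 * w0)) + Complex.I • P (z * (star w1 * w1))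
              - P (z * (star w2 * w2)) - Complex.I • P (z * (star w3 * w3)) := by
              rw [(hsq w0 z hpw0).1, (hsq w1 z hpw1).1, (hsq w2 z hpw2).1, (hsq w3 z hpw3).1]
        _ = P (z * ((4:ℂ) • (u * v))) := by
              rw [hpol]
              simp only [map_add, map_sub, map_smul, mul_add, mul_sub, mul_smul_comm]
        _ = (4:ℂ) • P (z * (u * v)) := by rw [mul_smul_comm, map_smul]
      exact smul_right_injective A (by norm_num : (4:ℂ) ≠ 0) h4
    · have h4 : (4:ℂ) • P (P (u * v) * z) = (4:ℂ) • P ((u * v) * z) := by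
        calc (4:ℂ) • P (P (u * v) * z) = P (P ((4:ℂ) • (u * v)) * z) := by
              rw [map_smul, smul_mul_assoc, map_smul]
        _ = P (P (star w0 * w0) * z) + Complex.I • P (P (star w1 * w1) * z)
              - P (P (star w2 * w2) * z) - Complex.I • P (P (star w3 * w3) * z) := by
              rw [hpol]
              simp only [map_add, map_sub, map_smul, add_mul, sub_mul, smul_mul_assoc]
        _ = P ((star w0 * w0) * z) + Complex.I • P ((star w1 * w1) * z)
              - P ((star w2 * w2) * z) - Complex.I • P ((star w3 * w3) * z) := by
              rw [(hsq w0 z hpw0).2, (hsq w1 z hpw1).2, (hsq w2 z hpw2).2, (hsq w3 z hpw3).2]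
        _ = P (((4:ℂ) • (u * v)) * z) := by
              rw [hpol]
              simp only [map_add, map_sub, map_smul, add_mul, sub_mul, smul_mul_assoc]
        _ = (4:ℂ) • P ((u * v) * z) := by rw [smul_mul_assoc, map_smul]
      exact smul_right_injective A (by norm_num : (4:ℂ) ≠ 0) h4
  refine ⟨fun a => ⟨star a, (hstar a).symm⟩, ⟨1, hone⟩, ?_, ?_, ?_, ?_⟩
  · -- associativity
    intro a b c
    have h1 : P (P (P a * P b) * P c) = P ((P a * P b) * P c) :=
      (hmul (P a) (P b) (P c) (hidem a) (hidem b)).2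
    have h2 : P (P a * P (P b * P c)) = P (P a * (P b * P c)) :=
      (hmul (P b) (P c) (P a) (hidem b) (hidem c)).1
    rw [h1, h2, mul_assoc]
  · -- submultiplicativity
    intro a b
    calc ‖P (P a * P b)‖ ≤ ‖P a * P b‖ := hnorm _
    _ ≤ ‖P a‖ * ‖P b‖ := norm_mul_le _ _
  · -- involution anti-multiplicative
    intro a b
    rw [← hstar, star_mul]
  · -- C*-identity
    intro a
    have hu : P (P a) = P a := hidem a
    have hsu : P (star (P a)) = star (P a) := by rw [hstar, hu]
    have hle : P a * star (P a) ≤ P (P a * star (P a)) := by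
      have := hschwarz (star (P a))
      rwa [hsu, star_star] at this
    have h1 : ‖P a * star (P a)‖ ≤ ‖P (P a * star (P a))‖ :=
      CStarAlgebra.norm_le_norm_of_nonneg_of_le (mul_star_self_nonneg _) hle
    have h2 : ‖P (P a * star (P a))‖ ≤ ‖P a * star (P a)‖ := hnorm _
    have : ‖P (P a * star (P a))‖ = ‖P a * star (P a)‖ := le_antisymm h2 h1
    rw [this, CStarRing.norm_self_mul_star, pow_two]
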